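/- The number of weights of the form w·ω_k (w in the Weyl group of type B_n, ω_k = e_1+...+e_k) that are conjugate to 0 under the dot action (i.e. w·ω_k + ρ lies in the W-orbit of ρ) equals binomial(n - k/2, k/2) if k is even, and binomial(n - (k-1)/2 - 1, (k-1)/2) if k is odd. -/

import Mathlib

/-- The action of the type-B Weyl group element (σ, ε) (a permutation together with
sign changes) on a vector in ℚⁿ. -/
def signAct {n : ℕ} (σ : Equiv.Perm (Fin n)) (ε : Fin n → ℚ) (v : Fin n → ℚ) : Fin n → ℚ :=
  fun i => ε i * v (σ⁻¹ i)

/-- ε is a choice of signs. -/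
def IsSign {n : ℕ} (ε : Fin n → ℚ) : Prop := ∀ i, ε i = 1 ∨ ε i = -1



/-- The absolute-value profile `max (n - i + μ i) 1`. -/
def Hq (n : ℕ) (μ : Fin n → ℚ) (i : Fin n) : ℚ := max ((n : ℚ) - (i : ℕ) + μ i) 1

/-- The pattern vector associated to a set `A` of pair starts. -/
def patv (n k : ℕ) (A : Finset ℕ) (a : ℕ) : ℚ :=
  if a ∈ A then -1
  else if 1 ≤ a ∧ a - 1 ∈ A then 1
  else if k % 2 = 1 ∧ a = n - 1 then -1 else 0

def pat (n k : ℕ) (A : Finset ℕ) : Fin n → ℚ := fun i => patv n k A i.val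


/-- `A` has no two consecutive elements. -/
def Sp (A : Finset ℕ) : Prop := ∀ a ∈ A, a + 1 ∉ A

instance : DecidablePred Sp := fun A => by unfold Sp; infer_instance

lemma count_sparse : ∀ N m : ℕ,
    (((Finset.range N).powersetCard m).filter Sp).card = (N + 1 - m).choose m := by
  intro N
  induction N using Nat.strong_induction_on with
  | _ N ih =>
    intro m
    match N, m with
    | N, 0 =>
      rw [Finset.powersetCard_zero]
      rw [Finset.filter_singleton]
      rw [if_pos (by intro a ha; simp at ha)]
      simp
    | 0, (m+1) =>
      rw [Finset.range_zero]
      have h1 : ((∅ : Finset ℕ).powersetCard (m+1)) = ∅ := by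
        ext A; simp [Finset.mem_powersetCard]
        intro h hc; subst h; simp at hc
      rw [h1]
      simp [Nat.choose_eq_zero_of_lt (by omega : 0 + 1 - (m+1) < m + 1)]
    | 1, (m+1) =>
      match m with
      | 0 =>
        rw [show (1:ℕ) + 1 - 1 = 1 by rfl, Nat.choose_self]
        rw [show Finset.range 1 = {0} by rfl]
        rw [show ({0} : Finset ℕ).powersetCard 1 = {{0}} by rfl]
        rw [Finset.filter_singleton]
        rw [if_pos (by intro a ha; simp at ha; subst ha; simp)]
        simp
      | (m+1) =>
        have h1 : ((Finset.range 1).powersetCard (m+2)) = ∅ := by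
          ext A; simp only [Finset.mem_powersetCard, Finset.notMem_empty, iff_false, not_and]
          intro h
          have := Finset.card_le_card h
          simp at this
          omega
        rw [h1]
        simp [Nat.choose_eq_zero_of_lt (by omega : 1 + 1 - (m+2) < m + 2)]
    | (N+2), (m+1) =>
      classical
      set S := ((Finset.range (N+2)).powersetCard (m+1)).filter Sp with hS
      have hsplit : (S.filter (fun A => (N+1) ∉ A)).card
          + (S.filter (fun A => (N+1) ∈ A)).card = S.card := by
        rw [add_comm]
        exact Finset.card_filter_add_card_filter_not (s := S) (fun A => (N+1) ∈ A)
      have h1 : S.filter (fun A => (N+1) ∉ A)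
          = ((Finset.range (N+1)).powersetCard (m+1)).filter Sp := by
        ext A
        simp only [hS, Finset.mem_filter, Finset.mem_powersetCard]
        constructor
        · rintro ⟨⟨⟨hsub, hcard⟩, hsp⟩, hnm⟩
          refine ⟨⟨?_, hcard⟩, hsp⟩
          intro a ha
          have h3 := hsub ha
          rw [Finset.mem_range] at h3 ⊢
          rcases Nat.lt_or_ge a (N+1) with h | h
          · exact h
          · exfalso; have h4 : a = N+1 := by omega
            exact hnm (h4 ▸ ha)
        · rintro ⟨⟨hsub, hcard⟩, hsp⟩
          refine ⟨⟨⟨?_, hcard⟩, hsp⟩, ?_⟩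
          · intro a ha; have h3 := hsub ha; rw [Finset.mem_range] at h3 ⊢; omega
          · intro hmem; have h3 := hsub hmem; rw [Finset.mem_range] at h3; omega
      have h2 : (S.filter (fun A => (N+1) ∈ A)).card
          = (((Finset.range N).powersetCard m).filter Sp).card := by
        refine Finset.card_bij' (fun A _ => A.erase (N+1)) (fun B _ => insert (N+1) B)
          ?_ ?_ ?_ ?_
        · -- hi : erase ∈ target
          rintro A hA
          simp only [hS, Finset.mem_filter, Finset.mem_powersetCard] at hA
          obtain ⟨⟨⟨hsub, hcard⟩, hsp⟩, hmem⟩ := hA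
          simp only [Finset.mem_filter, Finset.mem_powersetCard]
          refine ⟨⟨?_, ?_⟩, ?_⟩
          · intro a ha
            rw [Finset.mem_erase] at ha
            obtain ⟨hne, haA⟩ := ha
            have h3 := hsub haA
            rw [Finset.mem_range] at h3 ⊢
            rcases Nat.lt_or_ge a N with h | h
            · exact h
            · exfalso
              have h4 : a = N := by omega
              subst h4
              exact hsp _ haA hmem
          · rw [Finset.card_erase_of_mem hmem, hcard]; omega
          · intro a ha hb
            exact hsp a (Finset.mem_of_mem_erase ha) (Finset.mem_of_mem_erase hb)
        · -- hj : insert ∈ source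
          rintro B hB
          simp only [Finset.mem_filter, Finset.mem_powersetCard] at hB
          obtain ⟨⟨hsub, hcard⟩, hsp⟩ := hB
          have hnm : (N+1) ∉ B := by
            intro h; have h3 := hsub h; rw [Finset.mem_range] at h3; omega
          simp only [hS, Finset.mem_filter, Finset.mem_powersetCard]
          refine ⟨⟨⟨?_, ?_⟩, ?_⟩, by simp⟩
          · intro a ha
            rw [Finset.mem_insert] at ha
            rcases ha with rfl | ha
            · simp
            · have h3 := hsub ha; rw [Finset.mem_range] at h3 ⊢; omega
          · rw [Finset.card_insert_of_notMem hnm, hcard]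
          · intro a ha hb
            rw [Finset.mem_insert] at ha hb
            rcases ha with rfl | ha
            · rcases hb with hb | hb
              · omega
              · have h3 := hsub hb; rw [Finset.mem_range] at h3; omega
            · rcases hb with hb | hb
              · have h3 := hsub ha; rw [Finset.mem_range] at h3; omega
              · exact hsp a ha hb
        · -- left_inv
          intro A hA
          simp only [hS, Finset.mem_filter] at hA
          exact Finset.insert_erase hA.2
        · -- right_inv
          intro B hB
          simp only [Finset.mem_filter, Finset.mem_powersetCard] at hB
          apply Finset.erase_insert
          intro h; have h3 := hB.1.1 h; rw [Finset.mem_range] at h3; omega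
      have e1 : (S.filter (fun A => (N+1) ∉ A)).card = (N + 2 - (m+1)).choose (m+1) := by
        rw [h1, ih (N+1) (by omega)]
      have e2 : (((Finset.range N).powersetCard m).filter Sp).card = (N + 1 - m).choose m :=
        ih N (by omega) m
      have hc : S.card = (N + 2 - (m+1)).choose (m+1) + (N + 1 - m).choose m := by
        rw [← hsplit, e1, h2, e2]
      rw [hc]
      have harith : N + 2 - (m + 1) = N + 1 - m := by omega
      rw [harith]
      rcases Nat.lt_or_ge (N+1) m with h | h
      · have h0 : N + 1 - m = 0 := by omega
        rw [h0]
        rw [Nat.choose_eq_zero_of_lt (by omega : (0:ℕ) < m + 1),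
          Nat.choose_eq_zero_of_lt (by omega : (0:ℕ) < m),
          Nat.choose_eq_zero_of_lt (by omega : N + 2 + 1 - (m+1) < m + 1)]
      · have h5 : N + 2 + 1 - (m + 1) = (N + 1 - m) + 1 := by omega
        rw [h5, Nat.choose_succ_succ]
        exact add_comm _ _

lemma filt_card {n : ℕ} (p : ℕ → Prop) [DecidablePred p] :
    (Finset.univ.filter (fun i : Fin n => p i.val)).card
      = ((Finset.range n).filter p).card := by
  refine Finset.card_bij (fun i _ => i.val) ?_ ?_ ?_
  · intro a ha
    simp only [Finset.mem_filter, Finset.mem_univ, true_and] at ha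
    simp only [Finset.mem_filter, Finset.mem_range]
    exact ⟨a.isLt, ha⟩
  · intro a _ b _ h
    exact Fin.val_injective h
  · intro b hb
    simp only [Finset.mem_filter, Finset.mem_range] at hb
    exact ⟨⟨b, hb.1⟩, by simp [hb.2], rfl⟩

lemma card_le_filt {n c : ℕ} (hc : c ≤ n) :
    (Finset.univ.filter (fun i : Fin n => i.val < c)).card = c := by
  rw [filt_card (fun a => a < c)]
  have : (Finset.range n).filter (fun a => a < c) = Finset.range c := by
    ext a; simp only [Finset.mem_filter, Finset.mem_range]; omega
  rw [this, Finset.card_range]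

/-- A permutation of `Fin n` with displacement at most 1 is a product of disjoint
adjacent transpositions: if `τ i = i + 1` then `τ (i+1) = i`. -/
lemma adj_perm {n : ℕ} (τ : Equiv.Perm (Fin n))
    (hd : ∀ i : Fin n, (τ i : ℕ) ≤ (i : ℕ) + 1 ∧ (i : ℕ) ≤ (τ i : ℕ) + 1)
    (i j : Fin n) (hij : (j : ℕ) = (i : ℕ) + 1) (hτi : τ i = j) : τ j = i := by
  by_contra hne
  -- τ j ≠ j since τ i = j and i ≠ j
  have hij' : i ≠ j := by intro h; rw [h] at hij; omega
  have h1 : τ j ≠ j := by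
    intro h; exact hij' (τ.injective (hτi.trans h.symm))
  -- so (τ j : ℕ) = j + 1
  have h2 : (τ j : ℕ) = (j : ℕ) + 1 := by
    have hb := hd j
    have hvi : (τ j : ℕ) ≠ (i : ℕ) := by
      intro h; exact hne (Fin.val_injective h)
    have hvj : (τ j : ℕ) ≠ (j : ℕ) := by
      intro h; exact h1 (Fin.val_injective h)
    omega
  -- counting: C = {x : x ≤ i}, image under τ.symm lands in {x : x + 1 ≤ i}
  classical
  set C := Finset.univ.filter (fun x : Fin n => (x : ℕ) < (i : ℕ) + 1) with hC
  have hcC : C.card = (i : ℕ) + 1 := card_le_filt (by omega)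
  have hsub : C.image τ.symm ⊆ Finset.univ.filter (fun x : Fin n => (x : ℕ) < (i : ℕ)) := by
    intro x hx
    rw [Finset.mem_image] at hx
    obtain ⟨c, hc, rfl⟩ := hx
    rw [hC, Finset.mem_filter] at hc
    have hc2 : (c : ℕ) < (i : ℕ) + 1 := hc.2
    have hτx : τ (τ.symm c) = c := τ.apply_symm_apply c
    simp only [Finset.mem_filter, Finset.mem_univ, true_and]
    -- x := τ.symm c ; τ x = c ≤ i
    set x := τ.symm c with hxdef
    have hbx := hd x
    rw [hτx] at hbx
    have hxi : x ≠ i := by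
      intro h; rw [h, hτi] at hτx; rw [← hτx] at hc2; omega
    have hxj : x ≠ j := by
      intro h; rw [h] at hτx; rw [← hτx] at hc2; omega
    have hxvi : (x : ℕ) ≠ (i : ℕ) := fun h => hxi (Fin.val_injective h)
    have hxvj : (x : ℕ) ≠ (j : ℕ) := fun h => hxj (Fin.val_injective h)
    omega
  have hcard : C.card ≤ (i : ℕ) := by
    calc C.card = (C.image τ.symm).card := (Finset.card_image_of_injective _ τ.symm.injective).symm
    _ ≤ (Finset.univ.filter (fun x : Fin n => (x : ℕ) < (i : ℕ))).card := Finset.card_le_card hsub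
    _ = (i : ℕ) := card_le_filt (by omega)
  omega

lemma perm_filter_card {n : ℕ} (σ : Equiv.Perm (Fin n)) (p : Fin n → Prop) [DecidablePred p] :
    (Finset.univ.filter (fun i => p (σ i))).card = (Finset.univ.filter p).card := by
  refine Finset.card_bij (fun i _ => σ i) ?_ ?_ ?_
  · intro a ha; simp only [Finset.mem_filter, Finset.mem_univ, true_and] at ha ⊢; exact ha
  · intro a _ b _ h; exact σ.injective h
  · intro b hb
    simp only [Finset.mem_filter, Finset.mem_univ, true_and] at hb
    exact ⟨σ.symm b, by simpa using hb, σ.apply_symm_apply b⟩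

lemma sign_vals {n k : ℕ} (hk : k ≤ n) (μ : Fin n → ℚ)
    (h : ∃ σ ε, IsSign ε ∧ μ = signAct σ ε (fun i : Fin n => if (i : ℕ) < k then 1 else 0)) :
    (∀ i, μ i = -1 ∨ μ i = 0 ∨ μ i = 1) ∧
      (Finset.univ.filter (fun i => μ i ≠ 0)).card = k := by
  obtain ⟨σ, ε, hε, rfl⟩ := h
  constructor
  · intro i
    unfold signAct
    rcases hε i with h1 | h1 <;> rw [h1] <;> dsimp only <;> split <;> norm_num
  · have heq : (Finset.univ.filter (fun i => signAct σ ε (fun i : Fin n => if (i:ℕ) < k then 1 else 0) i ≠ 0))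
        = Finset.univ.filter (fun i => ((σ⁻¹ i : Fin n) : ℕ) < k) := by
      apply Finset.filter_congr
      intro i _
      unfold signAct
      dsimp only
      have hε0 : ε i ≠ 0 := by rcases hε i with h1 | h1 <;> rw [h1] <;> norm_num
      constructor
      · intro h2
        by_contra h3
        rw [if_neg h3] at h2
        simp at h2
      · intro h2
        rw [if_pos h2]
        simpa using hε0
    rw [heq, perm_filter_card σ⁻¹ (fun j => (j : ℕ) < k)]
    exact card_le_filt hk


lemma sign_exists {n k : ℕ} (hk : k ≤ n) (μ : Fin n → ℚ)
    (hval : ∀ i, μ i = -1 ∨ μ i = 0 ∨ μ i = 1)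
    (hcard : (Finset.univ.filter (fun i => μ i ≠ 0)).card = k) :
    ∃ σ ε, IsSign ε ∧ μ = signAct σ ε (fun i : Fin n => if (i : ℕ) < k then 1 else 0) := by
  classical
  have hc1 : Fintype.card {i : Fin n // μ i ≠ 0} = k := by
    rw [Fintype.card_subtype]; exact hcard
  have hc2 : Fintype.card {i : Fin n // (i : ℕ) < k} = k := by
    rw [Fintype.card_subtype]; exact card_le_filt hk
  have e : {i : Fin n // μ i ≠ 0} ≃ {i : Fin n // (i : ℕ) < k} :=
    Fintype.equivOfCardEq (hc1.trans hc2.symm)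
  refine ⟨(Equiv.extendSubtype e)⁻¹, fun i => if μ i = 0 then 1 else μ i, ?_, ?_⟩
  · intro i
    rcases hval i with h | h | h <;> dsimp only <;> rw [h] <;> norm_num
  · funext i
    unfold signAct
    rw [inv_inv]
    dsimp only
    by_cases h0 : μ i = 0
    · have hnm := Equiv.extendSubtype_not_mem e i (by simpa using h0)
      rw [if_neg hnm, h0]
      ring
    · have hm := Equiv.extendSubtype_mem e i h0
      rw [if_pos hm, if_neg h0]
      ring

section HqLemmas

variable {n : ℕ} (μ : Fin n → ℚ) (i : Fin n)

lemma hq_pos (h : μ i = 1) : Hq n μ i = (n : ℚ) - (i : ℕ) + 1 := by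
  have hi : ((i : ℕ) : ℚ) < (n : ℚ) := by exact_mod_cast i.isLt
  unfold Hq; rw [h, max_eq_left (by linarith)]

lemma hq_zero (h : μ i = 0) : Hq n μ i = (n : ℚ) - (i : ℕ) := by
  have hi : ((i : ℕ) : ℚ) + 1 ≤ (n : ℚ) := by exact_mod_cast i.isLt
  unfold Hq; rw [h, add_zero, max_eq_left (by linarith)]

lemma hq_neg (h : μ i = -1) (h2 : (i : ℕ) + 1 < n) : Hq n μ i = (n : ℚ) - (i : ℕ) - 1 := by
  have hi : ((i : ℕ) : ℚ) + 2 ≤ (n : ℚ) := by exact_mod_cast h2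
  unfold Hq
  rw [h, show (n : ℚ) - (i : ℕ) + -1 = (n : ℚ) - (i : ℕ) - 1 by ring,
    max_eq_left (by linarith)]

lemma hq_neg_last (h : μ i = -1) (h2 : (i : ℕ) + 1 = n) : Hq n μ i = 1 := by
  have hi : ((i : ℕ) : ℚ) + 1 = (n : ℚ) := by exact_mod_cast h2
  unfold Hq
  rw [h, max_eq_right (by linarith)]

lemma abs_eq_hq (hval : ∀ i, μ i = -1 ∨ μ i = 0 ∨ μ i = 1) :
    |μ i + (2 * (n : ℚ) - 2 * ((i : ℕ) + 1) + 1) / 2| = Hq n μ i - 1/2 := by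
  have hx : μ i + (2 * (n : ℚ) - 2 * ((i : ℕ) + 1) + 1) / 2
      = ((n : ℚ) - (i : ℕ) + μ i) - 1/2 := by ring
  have hi : ((i : ℕ) : ℚ) + 1 ≤ (n : ℚ) := by exact_mod_cast i.isLt
  have hcase : (n : ℚ) - (i : ℕ) + μ i = 0 ∨ 1 ≤ (n : ℚ) - (i : ℕ) + μ i := by
    rcases hval i with h | h | h
    · rcases Nat.lt_or_ge ((i : ℕ) + 1) n with h2 | h2
      · right
        have : ((i : ℕ) : ℚ) + 2 ≤ (n : ℚ) := by exact_mod_cast h2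
        rw [h]; linarith
      · left
        have h3 : (i : ℕ) + 1 = n := by omega
        have : ((i : ℕ) : ℚ) + 1 = (n : ℚ) := by exact_mod_cast h3
        rw [h]; linarith
    · right; rw [h]; linarith
    · right; rw [h]; linarith
  unfold Hq
  rw [hx]
  rcases hcase with h | h
  · rw [h, max_eq_right (by norm_num)]
    norm_num
  · rw [max_eq_left (by linarith), abs_of_nonneg (by linarith)]

lemma rho_nonneg : 0 ≤ (2 * (n : ℚ) - 2 * ((i : ℕ) + 1) + 1) / 2 := by
  have hi : ((i : ℕ) : ℚ) + 1 ≤ (n : ℚ) := by exact_mod_cast i.isLt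
  linarith

end HqLemmas

lemma orbit_iff {n : ℕ} (μ : Fin n → ℚ) (hval : ∀ i, μ i = -1 ∨ μ i = 0 ∨ μ i = 1) :
    (∃ σ ε, IsSign ε ∧ signAct σ ε
        (μ + fun j : Fin n => (2 * (n : ℚ) - 2 * ((j : ℕ) + 1) + 1) / 2)
      = fun j : Fin n => (2 * (n : ℚ) - 2 * ((j : ℕ) + 1) + 1) / 2) ↔
    ∃ τ : Equiv.Perm (Fin n), ∀ i, ((τ i : ℕ) : ℚ) = (n : ℚ) - Hq n μ i := by
  set ρ : Fin n → ℚ := fun j : Fin n => (2 * (n : ℚ) - 2 * ((j : ℕ) + 1) + 1) / 2 with hρ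
  constructor
  · rintro ⟨σ, ε, hε, hact⟩
    refine ⟨σ, fun j => ?_⟩
    have h1 := congrFun hact (σ j)
    unfold signAct at h1
    rw [(Equiv.Perm.inv_eq_iff_eq.mpr rfl : σ⁻¹ (σ j) = j)] at h1
    have h2 : (μ + ρ) j = μ j + ρ j := rfl
    rw [h2] at h1
    have habs1 : |ε (σ j)| = 1 := by
      rcases hε (σ j) with h | h <;> rw [h] <;> norm_num
    have habs : |μ j + ρ j| = |ρ (σ j)| := by
      rw [← h1, abs_mul, habs1, one_mul]
    rw [abs_of_nonneg (rho_nonneg (σ j))] at habs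
    rw [abs_eq_hq μ j hval] at habs
    have hρj : ρ (σ j) = (n : ℚ) - ((σ j : ℕ) : ℚ) - 1/2 := by rw [hρ]; push_cast; ring
    linarith
  · rintro ⟨τ, hτ⟩
    refine ⟨τ, fun i => if μ (τ⁻¹ i) + ρ (τ⁻¹ i) = ρ i then 1 else -1, ?_, ?_⟩
    · intro i; dsimp only; split
      · left; rfl
      · right; rfl
    · funext i
      unfold signAct
      dsimp only
      have hj : τ (τ⁻¹ i) = i := (Equiv.eq_symm_apply τ).mp rfl
      have habs : |μ (τ⁻¹ i) + ρ (τ⁻¹ i)| = Hq n μ (τ⁻¹ i) - 1/2 := abs_eq_hq μ _ hval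
      have h3 := hτ (τ⁻¹ i)
      rw [hj] at h3
      have hρi : ρ i = (n : ℚ) - ((i : ℕ) : ℚ) - 1/2 := by rw [hρ]; push_cast; ring
      have habs2 : |μ (τ⁻¹ i) + ρ (τ⁻¹ i)| = ρ i := by
        rw [habs, hρi]; linarith
      have h4 : (μ + ρ) (τ⁻¹ i) = μ (τ⁻¹ i) + ρ (τ⁻¹ i) := rfl
      rw [h4]
      split
      · rename_i h; rw [h]; ring
      · rename_i h
        have h0 : 0 ≤ ρ i := rho_nonneg i
        rcases (abs_eq h0).mp habs2 with h5 | h5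
        · exact absurd h5 h
        · rw [h5]; ring

section Struct

variable {n : ℕ} (μ : Fin n → ℚ) (τ : Equiv.Perm (Fin n))

lemma disp (hval : ∀ i, μ i = -1 ∨ μ i = 0 ∨ μ i = 1)
    (hτ : ∀ i, ((τ i : ℕ) : ℚ) = (n : ℚ) - Hq n μ i) :
    ∀ i : Fin n, (τ i : ℕ) ≤ (i : ℕ) + 1 ∧ (i : ℕ) ≤ (τ i : ℕ) + 1 := by
  intro i
  have h1 := hτ i
  have hi : ((i : ℕ) : ℚ) + 1 ≤ (n : ℚ) := by exact_mod_cast i.isLt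
  have hμ : -1 ≤ μ i ∧ μ i ≤ 1 := by rcases hval i with h | h | h <;> rw [h] <;> norm_num
  have hub : Hq n μ i ≤ (n : ℚ) - (i : ℕ) + 1 :=
    max_le (by linarith [hμ.2]) (by linarith)
  have hlb : (n : ℚ) - (i : ℕ) - 1 ≤ Hq n μ i :=
    le_trans (by linarith [hμ.1]) (le_max_left _ _)
  constructor
  · exact_mod_cast (by linarith : ((τ i : ℕ) : ℚ) ≤ ((i : ℕ) : ℚ) + 1)
  · exact_mod_cast (by linarith : ((i : ℕ) : ℚ) ≤ ((τ i : ℕ) : ℚ) + 1)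

lemma struct_pos (hval : ∀ i, μ i = -1 ∨ μ i = 0 ∨ μ i = 1)
    (hτ : ∀ i, ((τ i : ℕ) : ℚ) = (n : ℚ) - Hq n μ i)
    (i : Fin n) (h1 : μ i = 1) :
    1 ≤ (i : ℕ) ∧ ∀ h' : (i : ℕ) - 1 < n, μ ⟨(i : ℕ) - 1, h'⟩ = -1 := by
  have hd := disp μ τ hval hτ
  have hd' : ∀ j : Fin n, (τ⁻¹ j : ℕ) ≤ (j : ℕ) + 1 ∧ (j : ℕ) ≤ (τ⁻¹ j : ℕ) + 1 := by
    intro j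
    have := hd (τ⁻¹ j)
    rw [((Equiv.eq_symm_apply τ).mp rfl : τ (τ⁻¹ j) = j)] at this
    exact ⟨this.2, this.1⟩
  have h2 := hτ i
  rw [hq_pos μ i h1] at h2
  have h0 : (0 : ℚ) ≤ ((τ i : ℕ) : ℚ) := by positivity
  have hi1 : 1 ≤ (i : ℕ) := by
    by_contra h
    have : (i : ℕ) = 0 := by omega
    rw [this] at h2
    norm_num at h2
    linarith
  refine ⟨hi1, ?_⟩
  intro h'
  set i' : Fin n := ⟨(i : ℕ) - 1, h'⟩ with hi'
  have hci' : ((i'.val : ℕ) : ℚ) = ((i : ℕ) : ℚ) - 1 := by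
    rw [hi']
    push_cast [Nat.cast_sub hi1]
    ring
  have hτi : τ i = i' := by
    apply Fin.ext
    have : ((τ i : ℕ) : ℚ) = ((i'.val : ℕ) : ℚ) := by rw [hci']; linarith
    exact_mod_cast this
  have hinv : τ⁻¹ i' = i := by rw [← hτi]; exact Equiv.Perm.inv_eq_iff_eq.mpr rfl
  have hadj : τ⁻¹ i = i' := by
    apply adj_perm τ⁻¹ hd' i' i _ hinv
    show (i : ℕ) = (i : ℕ) - 1 + 1
    omega
  have hτi' : τ i' = i := by
    have : τ (τ⁻¹ i) = i := (Equiv.eq_symm_apply τ).mp rfl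
    rwa [hadj] at this
  have h3 := hτ i'
  rw [hτi'] at h3
  rcases hval i' with h | h | h
  · exact h
  · exfalso
    rw [hq_zero μ i' h] at h3
    rw [hci'] at h3
    linarith
  · exfalso
    rw [hq_pos μ i' h] at h3
    rw [hci'] at h3
    linarith

lemma struct_neg (hval : ∀ i, μ i = -1 ∨ μ i = 0 ∨ μ i = 1)
    (hτ : ∀ i, ((τ i : ℕ) : ℚ) = (n : ℚ) - Hq n μ i)
    (i : Fin n) (h1 : μ i = -1) (h2 : (i : ℕ) + 1 < n) :
    μ ⟨(i : ℕ) + 1, h2⟩ = 1 := by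
  have hd := disp μ τ hval hτ
  have h3 := hτ i
  rw [hq_neg μ i h1 h2] at h3
  set i' : Fin n := ⟨(i : ℕ) + 1, h2⟩ with hi'
  have hci' : ((i'.val : ℕ) : ℚ) = ((i : ℕ) : ℚ) + 1 := by rw [hi']; push_cast; ring
  have hτi : τ i = i' := by
    apply Fin.ext
    have : ((τ i : ℕ) : ℚ) = ((i'.val : ℕ) : ℚ) := by rw [hci']; linarith
    exact_mod_cast this
  have hadj : τ i' = i := by
    exact adj_perm τ hd i i' rfl hτi
  have h4 := hτ i'
  rw [hadj] at h4
  rcases hval i' with h | h | h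
  · exfalso
    rcases Nat.lt_or_ge ((i' : ℕ) + 1) n with hc | hc
    · rw [hq_neg μ i' h hc] at h4
      rw [hci'] at h4
      linarith
    · have hv : (i' : ℕ) = (i : ℕ) + 1 := rfl
      have hlast : (i' : ℕ) + 1 = n := by omega
      rw [hq_neg_last μ i' h hlast] at h4
      have : ((i : ℕ) : ℚ) + 2 = (n : ℚ) := by
        have : (i : ℕ) + 2 = n := by omega
        exact_mod_cast this
      linarith
  · exfalso
    rw [hq_zero μ i' h] at h4
    rw [hci'] at h4
    linarith
  · exact h

end Struct

lemma forward_char {n k : ℕ} (hk : k < n) (hk1 : 1 ≤ k) (μ : Fin n → ℚ)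
    (hval : ∀ i, μ i = -1 ∨ μ i = 0 ∨ μ i = 1)
    (hcard : (Finset.univ.filter (fun i => μ i ≠ 0)).card = k)
    (τ : Equiv.Perm (Fin n))
    (hτ : ∀ i, ((τ i : ℕ) : ℚ) = (n : ℚ) - Hq n μ i) :
    ∃ A ∈ ((Finset.range (n - 1 - k % 2)).powersetCard (k / 2)).filter Sp,
      μ = pat n k A := by
  classical
  have hn : 2 ≤ n := by omega
  set last : Fin n := ⟨n - 1, by omega⟩ with hlastdef
  have hlastval : (last : ℕ) = n - 1 := rfl
  set A' : Finset (Fin n) := Finset.univ.filter (fun i => μ i = -1 ∧ (i : ℕ) < n - 1)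
    with hA'
  set A : Finset ℕ := A'.image Fin.val with hA
  have g1 := struct_pos μ τ hval hτ
  have g2 := struct_neg μ τ hval hτ
  have hAmem : ∀ a : ℕ, a ∈ A ↔ ∃ h : a < n, μ ⟨a, h⟩ = -1 ∧ a < n - 1 := by
    intro a
    simp only [hA, hA', Finset.mem_image, Finset.mem_filter, Finset.mem_univ, true_and]
    constructor
    · rintro ⟨i, ⟨h1, h2⟩, rfl⟩
      exact ⟨i.isLt, by rwa [Fin.eta], h2⟩
    · rintro ⟨h, h1, h2⟩
      exact ⟨⟨a, h⟩, ⟨h1, h2⟩, rfl⟩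
  have hcardA : A.card = A'.card := Finset.card_image_of_injOn (Fin.val_injective.injOn)
  -- counting
  set Bm : Finset (Fin n) := Finset.univ.filter (fun i => μ i = -1) with hBm
  set Bp : Finset (Fin n) := Finset.univ.filter (fun i => μ i = 1) with hBp
  have hsplitB : Finset.univ.filter (fun i => μ i ≠ 0) = Bm ∪ Bp := by
    ext i
    simp only [hBm, hBp, Finset.mem_filter, Finset.mem_univ, true_and, Finset.mem_union]
    rcases hval i with h | h | h <;> rw [h] <;> norm_num
  have hdisj : Disjoint Bm Bp := by
    rw [Finset.disjoint_left]
    intro i h1 h2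
    simp only [hBm, hBp, Finset.mem_filter] at h1 h2
    rw [h1.2] at h2
    norm_num at h2
  have hkeq : k = Bm.card + Bp.card := by
    rw [← hcard, hsplitB, Finset.card_union_of_disjoint hdisj]
  have hBpA : Bp.card = A'.card := by
    refine Finset.card_bij (fun i hi => ⟨(i : ℕ) - 1, by omega⟩) ?_ ?_ ?_
    · intro i hi
      simp only [hBp, Finset.mem_filter, Finset.mem_univ, true_and] at hi
      obtain ⟨h1, h2⟩ := g1 i hi
      simp only [hA', Finset.mem_filter, Finset.mem_univ, true_and]
      refine ⟨h2 _, by omega⟩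
    · intro a ha b hb h
      simp only [hBp, Finset.mem_filter, Finset.mem_univ, true_and] at ha hb
      have ha1 := (g1 a ha).1
      have hb1 := (g1 b hb).1
      have := congrArg Fin.val h
      simp only at this
      apply Fin.ext
      omega
    · intro b hb
      simp only [hA', Finset.mem_filter, Finset.mem_univ, true_and] at hb
      refine ⟨⟨(b : ℕ) + 1, by omega⟩, ?_, ?_⟩
      · simp only [hBp, Finset.mem_filter, Finset.mem_univ, true_and]
        have := g2 b hb.1 (by omega)
        convert this using 2
      · apply Fin.ext
        simp
  have hBmA : Bm.card = A'.card + (if μ last = -1 then 1 else 0) := by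
    have hBmeq : Bm = A' ∪ (if μ last = -1 then {last} else ∅) := by
      ext i
      simp only [hBm, hA', Finset.mem_filter, Finset.mem_univ, true_and, Finset.mem_union]
      constructor
      · intro h
        rcases Nat.lt_or_ge (i : ℕ) (n - 1) with hlt | hge
        · exact Or.inl ⟨h, hlt⟩
        · right
          have hieq : i = last := by apply Fin.ext; simp only [hlastdef]; omega
          rw [hieq] at h
          rw [if_pos h]
          simp [hieq]
      · intro h
        rcases h with ⟨h, _⟩ | h
        · exact h
        · split at h
          · rename_i hc
            simp only [Finset.mem_singleton] at h
            rw [h]; exact hc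
          · simp at h
    rw [hBmeq, Finset.card_union_of_disjoint]
    · congr 1
      split
      · simp
      · simp
    · rw [Finset.disjoint_right]
      intro i hi
      split at hi
      · simp only [Finset.mem_singleton] at hi
        rw [hi]
        simp only [hA', Finset.mem_filter, Finset.mem_univ, true_and]
        rintro ⟨-, h2⟩
        omega
      · simp at hi
  have hslast : (if μ last = -1 then 1 else 0) = k % 2 ∧ A'.card = k / 2 := by
    have hs01 : (if μ last = -1 then 1 else 0) ≤ 1 := by split <;> omega
    omega
  have hAcard : A.card = k / 2 := by rw [hcardA]; exact hslast.2
  have hlast_iff : μ last = -1 ↔ k % 2 = 1 := by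
    rcases hslast.1 with h
    constructor
    · intro hc; rw [if_pos hc] at h; omega
    · intro hc
      by_contra hc2
      rw [if_neg hc2] at h
      omega
  -- A is in the right collection
  have hAin : A ∈ ((Finset.range (n - 1 - k % 2)).powersetCard (k / 2)).filter Sp := by
    simp only [Finset.mem_filter, Finset.mem_powersetCard]
    refine ⟨⟨?_, hAcard⟩, ?_⟩
    · intro a ha
      rw [hAmem] at ha
      obtain ⟨h, h1, h2⟩ := ha
      rw [Finset.mem_range]
      rcases Nat.eq_zero_or_pos (k % 2) with hpar | hpar
      · omega
      · have hpar1 : k % 2 = 1 := by omega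
        have hlneg : μ last = -1 := hlast_iff.mpr hpar1
        by_contra hcon
        have ha2 : a = n - 2 := by omega
        subst ha2
        have := g2 ⟨n - 2, h⟩ h1 (by omega : n - 2 + 1 < n)
        have hfe : (⟨(n - 2 : ℕ) + 1, by omega⟩ : Fin n) = last := by
          apply Fin.ext; exact (by omega : n - 2 + 1 = n - 1)
        rw [hfe] at this
        rw [this] at hlneg
        norm_num at hlneg
    · intro a ha hcon
      rw [hAmem] at ha hcon
      obtain ⟨h, h1, h2⟩ := ha
      obtain ⟨h', h1', h2'⟩ := hcon
      have := g2 ⟨a, h⟩ h1 (by omega : a + 1 < n)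
      have hfe : (⟨a + 1, by omega⟩ : Fin n) = ⟨a + 1, h'⟩ := rfl
      rw [hfe] at this
      rw [this] at h1'
      norm_num at h1'
  refine ⟨A, hAin, ?_⟩
  funext i
  unfold pat patv
  split_ifs with b1 b2 b3
  · rw [hAmem] at b1
    obtain ⟨h, h1, _⟩ := b1
    rwa [Fin.eta] at h1
  · obtain ⟨hb, hmem⟩ := b2
    rw [hAmem] at hmem
    obtain ⟨h, h1, h2⟩ := hmem
    have := g2 ⟨(i : ℕ) - 1, h⟩ h1 (by omega : (i : ℕ) - 1 + 1 < n)
    have hfe : (⟨(i : ℕ) - 1 + 1, by omega⟩ : Fin n) = i := by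
      apply Fin.ext; show (i : ℕ) - 1 + 1 = (i : ℕ); omega
    rwa [hfe] at this
  · obtain ⟨hk2, hival⟩ := b3
    have hieq : i = last := by apply Fin.ext; omega
    rw [hieq]
    exact hlast_iff.mpr hk2
  · rcases hval i with h | h | h
    · exfalso
      rcases Nat.lt_or_ge (i : ℕ) (n - 1) with hlt | hge
      · exact b1 ((hAmem _).mpr ⟨i.isLt, by rwa [Fin.eta], hlt⟩)
      · have hival : (i : ℕ) = n - 1 := by omega
        have hieq : i = last := by apply Fin.ext; omega
        rw [hieq] at h
        exact b3 ⟨hlast_iff.mp h, hival⟩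
    · exact h
    · exfalso
      obtain ⟨h1, h2⟩ := g1 i h
      apply b2
      refine ⟨h1, ?_⟩
      rw [hAmem]
      exact ⟨by omega, h2 _, by omega⟩

lemma pat_vals (n k : ℕ) (A : Finset ℕ) :
    ∀ i : Fin n, pat n k A i = -1 ∨ pat n k A i = 0 ∨ pat n k A i = 1 := by
  intro i
  unfold pat patv
  split_ifs <;> norm_num

lemma pat_card {n k : ℕ} (hk : k < n) (hk1 : 1 ≤ k) (A : Finset ℕ)
    (hA : A ∈ ((Finset.range (n - 1 - k % 2)).powersetCard (k / 2)).filter Sp) :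
    (Finset.univ.filter (fun i => pat n k A i ≠ 0)).card = k := by
  classical
  simp only [Finset.mem_filter, Finset.mem_powersetCard] at hA
  obtain ⟨⟨hsub, hcardA⟩, hsp⟩ := hA
  have hbA : ∀ a ∈ A, a < n - 1 - k % 2 := by
    intro a ha; have := hsub ha; rwa [Finset.mem_range] at this
  have hn : 2 ≤ n := by omega
  have hrfl : (Finset.univ.filter (fun i : Fin n => pat n k A i ≠ 0))
      = Finset.univ.filter (fun i : Fin n => patv n k A i.val ≠ 0) := rfl
  rw [hrfl, filt_card (fun a => patv n k A a ≠ 0)]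
  have hunion : (Finset.range n).filter (fun a => patv n k A a ≠ 0)
      = (A ∪ A.image (· + 1)) ∪ (if k % 2 = 1 then {n - 1} else ∅) := by
    ext a
    simp only [Finset.mem_filter, Finset.mem_range, Finset.mem_union, Finset.mem_image]
    constructor
    · rintro ⟨han, hnz⟩
      unfold patv at hnz
      split_ifs at hnz with c1 c2 c3
      · exact Or.inl (Or.inl c1)
      · exact Or.inl (Or.inr ⟨a - 1, c2.2, by omega⟩)
      · rw [if_pos c3.1]
        right
        simp [c3.2]
      · simp at hnz
    · intro h
      have hmem : patv n k A a ≠ 0 ∧ a < n := by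
        rcases h with (ha | ⟨b, hb, rfl⟩) | ha
        · have hb := hbA a ha
          refine ⟨?_, by omega⟩
          unfold patv
          rw [if_pos ha]
          norm_num
        · have hbb := hbA b hb
          have hnot : b + 1 ∉ A := hsp b hb
          refine ⟨?_, by omega⟩
          unfold patv
          rw [if_neg hnot, if_pos ⟨by omega, by simpa using hb⟩]
          norm_num
        · split at ha
          · rename_i hpar
            simp only [Finset.mem_singleton] at ha
            subst ha
            refine ⟨?_, by omega⟩
            unfold patv
            have h1 : n - 1 ∉ A := by
              intro hc; have := hbA _ hc; omega
            have h2 : ¬(1 ≤ n - 1 ∧ n - 1 - 1 ∈ A) := by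
              rintro ⟨-, hc⟩; have := hbA _ hc; omega
            rw [if_neg h1, if_neg h2, if_pos ⟨hpar, rfl⟩]
            norm_num
          · simp at ha
      exact ⟨hmem.2, hmem.1⟩
  rw [hunion]
  have hdisj1 : Disjoint A (A.image (· + 1)) := by
    rw [Finset.disjoint_right]
    intro a ha hc
    rw [Finset.mem_image] at ha
    obtain ⟨b, hb, rfl⟩ := ha
    exact hsp b hb hc
  have hdisj2 : Disjoint (A ∪ A.image (· + 1)) (if k % 2 = 1 then {n - 1} else ∅) := by
    rw [Finset.disjoint_right]
    intro a ha
    split at ha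
    · simp only [Finset.mem_singleton] at ha
      subst ha
      rw [Finset.mem_union, Finset.mem_image]
      rintro (hc | ⟨b, hb, hb2⟩)
      · have := hbA _ hc; omega
      · have := hbA _ hb; omega
    · simp at ha
  rw [Finset.card_union_of_disjoint hdisj2, Finset.card_union_of_disjoint hdisj1]
  rw [Finset.card_image_of_injective _ (add_left_injective 1)]
  rw [hcardA]
  split
  · rename_i h; rw [Finset.card_singleton]; omega
  · rename_i h
    rw [Finset.card_empty]
    omega

def tf (n : ℕ) (A : Finset ℕ) (hb : ∀ a ∈ A, a + 1 < n) : Fin n → Fin n := fun i =>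
  if h1 : i.val ∈ A then ⟨i.val + 1, hb _ h1⟩
  else if h2 : 1 ≤ i.val ∧ i.val - 1 ∈ A then
    ⟨i.val - 1, Nat.lt_of_le_of_lt (Nat.sub_le _ _) i.isLt⟩ else i

lemma tf_invol (n : ℕ) (A : Finset ℕ) (hb : ∀ a ∈ A, a + 1 < n) (hsp : Sp A) :
    Function.Involutive (tf n A hb) := by
  intro i
  unfold tf
  by_cases h1 : i.val ∈ A
  · rw [dif_pos h1]
    have hnot : ((⟨i.val + 1, hb _ h1⟩ : Fin n)).val ∉ A := hsp _ h1
    rw [dif_neg hnot, dif_pos (show 1 ≤ ((⟨i.val + 1, hb _ h1⟩ : Fin n)).val ∧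
        ((⟨i.val + 1, hb _ h1⟩ : Fin n)).val - 1 ∈ A from ⟨Nat.le_add_left 1 i.val, by simpa using h1⟩)]
    apply Fin.ext
    show i.val + 1 - 1 = i.val
    omega
  · by_cases h2 : 1 ≤ i.val ∧ i.val - 1 ∈ A
    · rw [dif_neg h1, dif_pos h2]
      rw [dif_pos (show ((⟨i.val - 1, Nat.lt_of_le_of_lt (Nat.sub_le _ _) i.isLt⟩ : Fin n)).val ∈ A from h2.2)]
      apply Fin.ext
      show i.val - 1 + 1 = i.val
      omega
    · rw [dif_neg h1, dif_neg h2, dif_neg h1, dif_neg h2]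

lemma pat_tau {n k : ℕ} (hk : k < n) (hk1 : 1 ≤ k) (A : Finset ℕ)
    (hA : A ∈ ((Finset.range (n - 1 - k % 2)).powersetCard (k / 2)).filter Sp) :
    ∃ τ : Equiv.Perm (Fin n), ∀ i, ((τ i : ℕ) : ℚ) = (n : ℚ) - Hq n (pat n k A) i := by
  classical
  simp only [Finset.mem_filter, Finset.mem_powersetCard] at hA
  obtain ⟨⟨hsub, hcardA⟩, hsp⟩ := hA
  have hbA : ∀ a ∈ A, a < n - 1 - k % 2 := by
    intro a ha; have := hsub ha; rwa [Finset.mem_range] at this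
  have hn : 2 ≤ n := by omega
  have hb : ∀ a ∈ A, a + 1 < n := by intro a ha; have := hbA a ha; omega
  refine ⟨Function.Involutive.toPerm _ (tf_invol n A hb hsp), ?_⟩
  intro i
  have hcoe : (Function.Involutive.toPerm _ (tf_invol n A hb hsp)) i = tf n A hb i := rfl
  rw [hcoe]
  have hin : ((i : ℕ) : ℚ) + 1 ≤ (n : ℚ) := by exact_mod_cast i.isLt
  unfold tf
  by_cases h1 : i.val ∈ A
  · rw [dif_pos h1]
    have hμ : pat n k A i = -1 := by
      unfold pat patv; rw [if_pos h1]
    rw [hq_neg _ i hμ (hb _ h1)]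
    show (((i : ℕ) + 1 : ℕ) : ℚ) = (n : ℚ) - ((n : ℚ) - (i : ℕ) - 1)
    push_cast
    ring
  · by_cases h2 : 1 ≤ i.val ∧ i.val - 1 ∈ A
    · rw [dif_neg h1, dif_pos h2]
      have hμ : pat n k A i = 1 := by
        unfold pat patv; rw [if_neg h1, if_pos h2]
      rw [hq_pos _ i hμ]
      show (((i : ℕ) - 1 : ℕ) : ℚ) = (n : ℚ) - ((n : ℚ) - (i : ℕ) + 1)
      rw [Nat.cast_sub h2.1]
      push_cast
      ring
    · rw [dif_neg h1, dif_neg h2]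
      by_cases h3 : k % 2 = 1 ∧ i.val = n - 1
      · have hμ : pat n k A i = -1 := by
          unfold pat patv; rw [if_neg h1, if_neg h2, if_pos h3]
        rw [hq_neg_last _ i hμ (by omega)]
        have : ((i : ℕ) : ℚ) = ((n - 1 : ℕ) : ℚ) := by rw [h3.2]
        rw [this, Nat.cast_sub (by omega : 1 ≤ n)]
        push_cast
        ring
      · have hμ : pat n k A i = 0 := by
          unfold pat patv; rw [if_neg h1, if_neg h2, if_neg h3]
        rw [hq_zero _ i hμ]
        ring

lemma pat_injOn {n k : ℕ} (hk : k < n) (hk1 : 1 ≤ k) :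
    Set.InjOn (pat n k) ↑(((Finset.range (n - 1 - k % 2)).powersetCard (k / 2)).filter Sp) := by
  have aux : ∀ A ∈ ((Finset.range (n - 1 - k % 2)).powersetCard (k / 2)).filter Sp,
      ∀ B, pat n k A = pat n k B → ∀ a, a ∈ A → a ∈ B := by
    intro A hA B h a ha
    simp only [Finset.mem_filter, Finset.mem_powersetCard] at hA
    have hrange := hA.1.1 ha
    rw [Finset.mem_range] at hrange
    have han : a < n := by omega
    have h1 : pat n k A ⟨a, han⟩ = -1 := by
      unfold pat patv
      rw [if_pos ha]
    rw [h] at h1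
    unfold pat patv at h1
    split_ifs at h1 with c1 c2 c3
    · exact c1
    · norm_num at h1
    · exfalso
      have hval' : ((⟨a, han⟩ : Fin n)).val = a := rfl
      omega
    · norm_num at h1
  intro A hA B hB h
  apply Finset.Subset.antisymm
  · intro a ha; exact aux A (by exact_mod_cast hA) B h a ha
  · intro a ha; exact aux B (by exact_mod_cast hB) A h.symm a ha

/-- For the root system B_n with ρ = (1/2)Σ (2n-2j+1)e_j and ω_k = e_1 + ⋯ + e_k,
the number of weights of the form w·ω_k (w in the Weyl group W = Sₙ ⋉ (ℤ/2)ⁿ) that are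
conjugate to 0 (i.e. w·ω_k + ρ lies in the W-orbit of ρ) is
binomial(n - k/2, k/2) if k is even and binomial(n - (k-1)/2 - 1, (k-1)/2) if k is odd. -/
theorem stmt0 (n k : ℕ) (hk : k < n) (hk1 : 1 ≤ k) :
    (let ρ : Fin n → ℚ := fun j => (2 * (n : ℚ) - 2 * ((j : ℕ) + 1) + 1) / 2
     let ω : Fin n → ℚ := fun i => if (i : ℕ) < k then 1 else 0
     Set.ncard {μ : Fin n → ℚ |
        (∃ σ ε, IsSign ε ∧ μ = signAct σ ε ω) ∧
        (∃ σ ε, IsSign ε ∧ signAct σ ε (μ + ρ) = ρ)}) =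
      (if k % 2 = 0 then Nat.choose (n - k / 2) (k / 2)
       else Nat.choose (n - (k - 1) / 2 - 1) ((k - 1) / 2)) := by
  classical
  have hset : {μ : Fin n → ℚ |
        (∃ σ ε, IsSign ε ∧ μ = signAct σ ε (fun i : Fin n => if (i : ℕ) < k then 1 else 0)) ∧
        (∃ σ ε, IsSign ε ∧ signAct σ ε
            (μ + fun j : Fin n => (2 * (n : ℚ) - 2 * ((j : ℕ) + 1) + 1) / 2)
          = fun j : Fin n => (2 * (n : ℚ) - 2 * ((j : ℕ) + 1) + 1) / 2)}
      = ↑((((Finset.range (n - 1 - k % 2)).powersetCard (k / 2)).filter Sp).image (pat n k)) := by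
    ext μ
    simp only [Set.mem_setOf_eq, Finset.coe_image, Set.mem_image, Finset.mem_coe]
    constructor
    · rintro ⟨h1, h2⟩
      obtain ⟨hval, hcard⟩ := sign_vals (le_of_lt hk) μ h1
      obtain ⟨τ, hτ⟩ := (orbit_iff μ hval).mp h2
      obtain ⟨A, hA, hμ⟩ := forward_char hk hk1 μ hval hcard τ hτ
      exact ⟨A, hA, hμ.symm⟩
    · rintro ⟨A, hA, rfl⟩
      refine ⟨sign_exists (le_of_lt hk) _ (pat_vals n k A) (pat_card hk hk1 A hA), ?_⟩
      exact (orbit_iff _ (pat_vals n k A)).mpr (pat_tau hk hk1 A hA)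
  show Set.ncard {μ : Fin n → ℚ |
        (∃ σ ε, IsSign ε ∧ μ = signAct σ ε (fun i : Fin n => if (i : ℕ) < k then 1 else 0)) ∧
        (∃ σ ε, IsSign ε ∧ signAct σ ε
            (μ + fun j : Fin n => (2 * (n : ℚ) - 2 * ((j : ℕ) + 1) + 1) / 2)
          = fun j : Fin n => (2 * (n : ℚ) - 2 * ((j : ℕ) + 1) + 1) / 2)} = _
  rw [hset, Set.ncard_coe_finset, Finset.card_image_of_injOn (pat_injOn hk hk1),
    count_sparse]
  by_cases hp : k % 2 = 0
  · rw [if_pos hp]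
    have e1 : n - 1 - k % 2 + 1 - k / 2 = n - k / 2 := by omega
    rw [e1]
  · rw [if_neg hp]
    have hp1 : k % 2 = 1 := by omega
    have e1 : n - 1 - k % 2 + 1 - k / 2 = n - (k - 1) / 2 - 1 := by omega
    have e2 : k / 2 = (k - 1) / 2 := by omega
    rw [e1, e2]
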